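/- Let τ = (1+√5)/2 and σ = (1−√5)/2. The subgroup of the group of units of the real quaternions generated by the three elements i, (−1+i+j+k)/2, and (i − σj − τk)/2 has exactly 120 elements (it is the binary icosahedral group). -/

import Mathlib

open Quaternion

/-- The standard quaternion unit `i`. -/
noncomputable def quatI : ℍ[ℝ] := ⟨0, 1, 0, 0⟩

/-- The standard quaternion unit `j`. -/
noncomputable def quatJ : ℍ[ℝ] := ⟨0, 0, 1, 0⟩

/-- The standard quaternion unit `k`. -/
noncomputable def quatK : ℍ[ℝ] := ⟨0, 0, 0, 1⟩


/-- Elements `a + b·τ` of `ℤ[τ]`, `τ = (1+√5)/2`, `τ² = τ + 1`. -/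
@[ext] structure GoldInt where
  a : ℤ
  b : ℤ
deriving DecidableEq

namespace GoldInt

instance : Zero GoldInt := ⟨⟨0, 0⟩⟩
instance : One GoldInt := ⟨⟨1, 0⟩⟩
instance : Add GoldInt := ⟨fun x y => ⟨x.a + y.a, x.b + y.b⟩⟩
instance : Neg GoldInt := ⟨fun x => ⟨-x.a, -x.b⟩⟩
instance : Mul GoldInt := ⟨fun x y => ⟨x.a * y.a + x.b * y.b, x.a * y.b + x.b * y.a + x.b * y.b⟩⟩

@[simp] theorem add_a (x y : GoldInt) : (x + y).a = x.a + y.a := rfl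
@[simp] theorem add_b (x y : GoldInt) : (x + y).b = x.b + y.b := rfl
@[simp] theorem neg_a (x : GoldInt) : (-x).a = -x.a := rfl
@[simp] theorem neg_b (x : GoldInt) : (-x).b = -x.b := rfl
@[simp] theorem mul_a (x y : GoldInt) : (x * y).a = x.a * y.a + x.b * y.b := rfl
@[simp] theorem mul_b (x y : GoldInt) : (x * y).b = x.a * y.b + x.b * y.a + x.b * y.b := rfl
@[simp] theorem zero_a : (0 : GoldInt).a = 0 := rfl
@[simp] theorem zero_b : (0 : GoldInt).b = 0 := rfl
@[simp] theorem one_a : (1 : GoldInt).a = 1 := rfl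
@[simp] theorem one_b : (1 : GoldInt).b = 0 := rfl

instance : CommRing GoldInt where
  add_assoc x y z := by ext <;> simp <;> ring
  zero_add x := by ext <;> simp
  add_zero x := by ext <;> simp
  add_comm x y := by ext <;> simp <;> ring
  neg_add_cancel x := by ext <;> simp
  mul_assoc x y z := by ext <;> simp <;> ring
  one_mul x := by ext <;> simp
  mul_one x := by ext <;> simp
  left_distrib x y z := by ext <;> simp <;> ring
  right_distrib x y z := by ext <;> simp <;> ring
  mul_comm x y := by ext <;> simp <;> ring
  zero_mul x := by ext <;> simp
  mul_zero x := by ext <;> simp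
  nsmul n x := ⟨n * x.a, n * x.b⟩
  nsmul_zero x := by ext <;> simp [HSMul.hSMul, SMul.smul]
  nsmul_succ n x := by ext <;> simp [HSMul.hSMul, SMul.smul] <;> push_cast <;> ring
  zsmul n x := ⟨n * x.a, n * x.b⟩
  zsmul_zero' x := by ext <;> simp [HSMul.hSMul, SMul.smul]
  zsmul_succ' n x := by ext <;> simp [HSMul.hSMul, SMul.smul] <;> push_cast <;> ring
  zsmul_neg' n x := by ext <;> simp [Int.negSucc_eq, HSMul.hSMul, SMul.smul] <;> push_cast <;> ring

/-- Evaluation `a + b·t : ℝ`. -/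
noncomputable def toR (t : ℝ) (x : GoldInt) : ℝ := x.a + x.b * t

noncomputable def toRHom (t : ℝ) (ht : t * t = t + 1) : GoldInt →+* ℝ where
  toFun := toR t
  map_one' := by simp [toR]
  map_zero' := by simp [toR]
  map_add' x y := by simp [toR]; push_cast; ring
  map_mul' x y := by simp [toR]; push_cast; linear_combination (-(x.b * y.b) : ℝ) * ht

end GoldInt

instance : DecidableEq ℍ[GoldInt] := fun x y =>
  decidable_of_iff (x.re = y.re ∧ x.imI = y.imI ∧ x.imJ = y.imJ ∧ x.imK = y.imK)
    (by constructor
        · rintro ⟨h1, h2, h3, h4⟩; exact QuaternionAlgebra.ext h1 h2 h3 h4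
        · rintro rfl; exact ⟨rfl, rfl, rfl, rfl⟩)

/-- Componentwise map `ℍ[ℤ[τ]] →+* ℍ[ℝ]`. -/
noncomputable def qmap (t : ℝ) (ht : t * t = t + 1) : ℍ[GoldInt] →+* ℍ[ℝ] where
  toFun x := ⟨GoldInt.toRHom t ht x.re, GoldInt.toRHom t ht x.imI,
              GoldInt.toRHom t ht x.imJ, GoldInt.toRHom t ht x.imK⟩
  map_one' := by ext <;> simp
  map_zero' := by ext <;> simp
  map_add' x y := by ext <;> simp <;> rfl
  map_mul' x y := by
    ext
    · refine Eq.trans ?_ (QuaternionAlgebra.re_mul _ _).symm; simp; ring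
    · refine Eq.trans ?_ (QuaternionAlgebra.imI_mul _ _).symm; simp; ring
    · refine Eq.trans ?_ (QuaternionAlgebra.imJ_mul _ _).symm; simp; ring
    · refine Eq.trans ?_ (QuaternionAlgebra.imK_mul _ _).symm; simp


theorem qmap_apply (t : ℝ) (ht : t * t = t + 1) (x : ℍ[GoldInt]) :
    qmap t ht x = ⟨(x.re.a : ℝ) + x.re.b * t, (x.imI.a : ℝ) + x.imI.b * t,
      (x.imJ.a : ℝ) + x.imJ.b * t, (x.imK.a : ℝ) + x.imK.b * t⟩ := rfl

theorem qmap_re (t : ℝ) (ht : t * t = t + 1) (x : ℍ[GoldInt]) :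
    (qmap t ht x).re = (x.re.a : ℝ) + x.re.b * t := rfl
theorem qmap_imI (t : ℝ) (ht : t * t = t + 1) (x : ℍ[GoldInt]) :
    (qmap t ht x).imI = (x.imI.a : ℝ) + x.imI.b * t := rfl
theorem qmap_imJ (t : ℝ) (ht : t * t = t + 1) (x : ℍ[GoldInt]) :
    (qmap t ht x).imJ = (x.imJ.a : ℝ) + x.imJ.b * t := rfl
theorem qmap_imK (t : ℝ) (ht : t * t = t + 1) (x : ℍ[GoldInt]) :
    (qmap t ht x).imK = (x.imK.a : ℝ) + x.imK.b * t := rfl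

theorem qmap_step (t : ℝ) (ht : t * t = t + 1) (W X Z : ℍ[GoldInt]) (hWXZ : W * X = Z + Z) :
    ((2⁻¹ : ℝ) • qmap t ht W) * ((2⁻¹ : ℝ) • qmap t ht X) = (2⁻¹ : ℝ) • qmap t ht Z := by
  rw [smul_mul_smul_comm, ← map_mul, hWXZ, map_add]
  rw [← two_smul ℝ (qmap t ht Z), smul_smul]
  norm_num

def goldFour : ℍ[GoldInt] := ⟨⟨4, 0⟩, ⟨0, 0⟩, ⟨0, 0⟩, ⟨0, 0⟩⟩

theorem qmap_inv_step (t : ℝ) (ht : t * t = t + 1) (W X : ℍ[GoldInt])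
    (h4 : W * X = goldFour) :
    ((2⁻¹ : ℝ) • qmap t ht W) * ((2⁻¹ : ℝ) • qmap t ht X) = 1 := by
  rw [smul_mul_smul_comm, ← map_mul, h4]
  rw [show qmap t ht goldFour = ((4 : ℝ) : ℍ[ℝ]) by
    rw [qmap_apply]; ext <;> simp [goldFour] <;> norm_num]
  ext <;> simp <;> norm_num

theorem unit_inv_val {u : ℍ[ℝ]ˣ} {w : ℍ[ℝ]} (hw : (↑u : ℍ[ℝ]) * w = 1) :
    (↑u⁻¹ : ℍ[ℝ]) = w := by
  calc (↑u⁻¹ : ℍ[ℝ]) = ↑u⁻¹ * ((↑u : ℍ[ℝ]) * w) := by rw [hw, mul_one]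
  _ = ((↑u⁻¹ * ↑u : ℍ[ℝ])) * w := (mul_assoc _ _ _).symm
  _ = w := by rw [Units.inv_mul, one_mul]

theorem toR_injective (t : ℝ) (hirr : Irrational t) : Function.Injective (GoldInt.toR t) := by
  intro x y hxy
  unfold GoldInt.toR at hxy
  by_cases hbd : x.b = y.b
  · ext
    · have : (x.a : ℝ) = y.a := by rw [hbd] at hxy; linarith
      exact_mod_cast this
    · exact hbd
  · exfalso
    have hb : ((y.b - x.b : ℤ) : ℝ) ≠ 0 := by
      push_cast; intro hc; apply hbd; have : (x.b : ℝ) = y.b := by linarith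
      exact_mod_cast this
    have hteq : t = ((x.a - y.a : ℤ) : ℝ) / ((y.b - x.b : ℤ) : ℝ) := by
      rw [eq_div_iff hb]; push_cast; linear_combination -hxy
    apply hirr
    refine ⟨((x.a - y.a : ℤ) : ℚ) / ((y.b - x.b : ℤ) : ℚ), ?_⟩
    rw [hteq]; push_cast; ring

theorem qmap_injective (t : ℝ) (ht : t * t = t + 1) (hirr : Irrational t) :
    Function.Injective (qmap t ht) := by
  intro x y hxy
  have h1 : GoldInt.toR t x.re = GoldInt.toR t y.re := congrArg QuaternionAlgebra.re hxy
  have h2 : GoldInt.toR t x.imI = GoldInt.toR t y.imI := congrArg QuaternionAlgebra.imI hxy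
  have h3 : GoldInt.toR t x.imJ = GoldInt.toR t y.imJ := congrArg QuaternionAlgebra.imJ hxy
  have h4 : GoldInt.toR t x.imK = GoldInt.toR t y.imK := congrArg QuaternionAlgebra.imK hxy
  exact QuaternionAlgebra.ext (toR_injective t hirr h1) (toR_injective t hirr h2)
    (toR_injective t hirr h3) (toR_injective t hirr h4)

def ico0 : ℍ[GoldInt] := ⟨⟨0, 0⟩, ⟨2, 0⟩, ⟨0, 0⟩, ⟨0, 0⟩⟩
def ico1 : ℍ[GoldInt] := ⟨⟨-1, 0⟩, ⟨1, 0⟩, ⟨1, 0⟩, ⟨1, 0⟩⟩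
def ico2 : ℍ[GoldInt] := ⟨⟨0, 0⟩, ⟨1, 0⟩, ⟨-1, 1⟩, ⟨0, -1⟩⟩
def ico3 : ℍ[GoldInt] := ⟨⟨-2, 0⟩, ⟨0, 0⟩, ⟨0, 0⟩, ⟨0, 0⟩⟩
def ico4 : ℍ[GoldInt] := ⟨⟨-1, 0⟩, ⟨-1, 0⟩, ⟨-1, 0⟩, ⟨1, 0⟩⟩
def ico5 : ℍ[GoldInt] := ⟨⟨-1, 0⟩, ⟨0, 0⟩, ⟨0, 1⟩, ⟨-1, 1⟩⟩
def ico6 : ℍ[GoldInt] := ⟨⟨-1, 0⟩, ⟨-1, 0⟩, ⟨1, 0⟩, ⟨-1, 0⟩⟩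
def ico7 : ℍ[GoldInt] := ⟨⟨-1, 0⟩, ⟨-1, 0⟩, ⟨-1, 0⟩, ⟨-1, 0⟩⟩
def ico8 : ℍ[GoldInt] := ⟨⟨0, 0⟩, ⟨0, -1⟩, ⟨1, 0⟩, ⟨-1, 1⟩⟩
def ico9 : ℍ[GoldInt] := ⟨⟨-1, 0⟩, ⟨0, 0⟩, ⟨0, -1⟩, ⟨1, -1⟩⟩
def ico10 : ℍ[GoldInt] := ⟨⟨0, 0⟩, ⟨-1, 1⟩, ⟨0, -1⟩, ⟨1, 0⟩⟩
def ico11 : ℍ[GoldInt] := ⟨⟨0, 0⟩, ⟨-2, 0⟩, ⟨0, 0⟩, ⟨0, 0⟩⟩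
def ico12 : ℍ[GoldInt] := ⟨⟨1, 0⟩, ⟨-1, 0⟩, ⟨-1, 0⟩, ⟨-1, 0⟩⟩
def ico13 : ℍ[GoldInt] := ⟨⟨0, 0⟩, ⟨-1, 0⟩, ⟨1, -1⟩, ⟨0, 1⟩⟩
def ico14 : ℍ[GoldInt] := ⟨⟨1, 0⟩, ⟨-1, 0⟩, ⟨1, 0⟩, ⟨1, 0⟩⟩
def ico15 : ℍ[GoldInt] := ⟨⟨1, 0⟩, ⟨-1, 0⟩, ⟨1, 0⟩, ⟨-1, 0⟩⟩
def ico16 : ℍ[GoldInt] := ⟨⟨0, 1⟩, ⟨0, 0⟩, ⟨1, -1⟩, ⟨1, 0⟩⟩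
def ico17 : ℍ[GoldInt] := ⟨⟨0, 0⟩, ⟨-1, 0⟩, ⟨-1, 1⟩, ⟨0, -1⟩⟩
def ico18 : ℍ[GoldInt] := ⟨⟨1, -1⟩, ⟨0, 0⟩, ⟨-1, 0⟩, ⟨0, -1⟩⟩
def ico19 : ℍ[GoldInt] := ⟨⟨1, 0⟩, ⟨1, 0⟩, ⟨-1, 0⟩, ⟨-1, 0⟩⟩
def ico20 : ℍ[GoldInt] := ⟨⟨1, -1⟩, ⟨-1, 0⟩, ⟨0, -1⟩, ⟨0, 0⟩⟩
def ico21 : ℍ[GoldInt] := ⟨⟨1, 0⟩, ⟨-1, 0⟩, ⟨-1, 0⟩, ⟨1, 0⟩⟩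
def ico22 : ℍ[GoldInt] := ⟨⟨2, 0⟩, ⟨0, 0⟩, ⟨0, 0⟩, ⟨0, 0⟩⟩
def ico23 : ℍ[GoldInt] := ⟨⟨0, 1⟩, ⟨0, 0⟩, ⟨-1, 1⟩, ⟨-1, 0⟩⟩
def ico24 : ℍ[GoldInt] := ⟨⟨0, 1⟩, ⟨-1, 0⟩, ⟨0, 0⟩, ⟨-1, 1⟩⟩
def ico25 : ℍ[GoldInt] := ⟨⟨0, 0⟩, ⟨1, 0⟩, ⟨1, -1⟩, ⟨0, 1⟩⟩
def ico26 : ℍ[GoldInt] := ⟨⟨1, -1⟩, ⟨0, 0⟩, ⟨1, 0⟩, ⟨0, 1⟩⟩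
def ico27 : ℍ[GoldInt] := ⟨⟨1, 0⟩, ⟨1, 0⟩, ⟨1, 0⟩, ⟨1, 0⟩⟩
def ico28 : ℍ[GoldInt] := ⟨⟨1, 0⟩, ⟨1, 0⟩, ⟨1, 0⟩, ⟨-1, 0⟩⟩
def ico29 : ℍ[GoldInt] := ⟨⟨1, 0⟩, ⟨0, 0⟩, ⟨0, -1⟩, ⟨1, -1⟩⟩
def ico30 : ℍ[GoldInt] := ⟨⟨1, 0⟩, ⟨1, 0⟩, ⟨-1, 0⟩, ⟨1, 0⟩⟩
def ico31 : ℍ[GoldInt] := ⟨⟨0, 0⟩, ⟨0, 1⟩, ⟨-1, 0⟩, ⟨1, -1⟩⟩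
def ico32 : ℍ[GoldInt] := ⟨⟨1, 0⟩, ⟨0, 0⟩, ⟨0, 1⟩, ⟨-1, 1⟩⟩
def ico33 : ℍ[GoldInt] := ⟨⟨0, 0⟩, ⟨1, -1⟩, ⟨0, 1⟩, ⟨-1, 0⟩⟩
def ico34 : ℍ[GoldInt] := ⟨⟨-1, 0⟩, ⟨1, 0⟩, ⟨1, 0⟩, ⟨-1, 0⟩⟩
def ico35 : ℍ[GoldInt] := ⟨⟨1, 0⟩, ⟨1, -1⟩, ⟨0, 0⟩, ⟨0, -1⟩⟩
def ico36 : ℍ[GoldInt] := ⟨⟨0, 0⟩, ⟨0, 1⟩, ⟨1, 0⟩, ⟨-1, 1⟩⟩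
def ico37 : ℍ[GoldInt] := ⟨⟨1, 0⟩, ⟨0, 1⟩, ⟨1, -1⟩, ⟨0, 0⟩⟩
def ico38 : ℍ[GoldInt] := ⟨⟨0, 0⟩, ⟨1, -1⟩, ⟨0, -1⟩, ⟨1, 0⟩⟩
def ico39 : ℍ[GoldInt] := ⟨⟨-1, 0⟩, ⟨1, 0⟩, ⟨-1, 0⟩, ⟨1, 0⟩⟩
def ico40 : ℍ[GoldInt] := ⟨⟨0, 0⟩, ⟨0, 0⟩, ⟨0, 0⟩, ⟨2, 0⟩⟩
def ico41 : ℍ[GoldInt] := ⟨⟨-1, 0⟩, ⟨0, 1⟩, ⟨-1, 1⟩, ⟨0, 0⟩⟩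
def ico42 : ℍ[GoldInt] := ⟨⟨1, 0⟩, ⟨1, -1⟩, ⟨0, 0⟩, ⟨0, 1⟩⟩
def ico43 : ℍ[GoldInt] := ⟨⟨0, 1⟩, ⟨1, -1⟩, ⟨1, 0⟩, ⟨0, 0⟩⟩
def ico44 : ℍ[GoldInt] := ⟨⟨0, 0⟩, ⟨0, 0⟩, ⟨2, 0⟩, ⟨0, 0⟩⟩
def ico45 : ℍ[GoldInt] := ⟨⟨0, 1⟩, ⟨1, 0⟩, ⟨0, 0⟩, ⟨1, -1⟩⟩
def ico46 : ℍ[GoldInt] := ⟨⟨1, -1⟩, ⟨0, 1⟩, ⟨0, 0⟩, ⟨1, 0⟩⟩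
def ico47 : ℍ[GoldInt] := ⟨⟨-1, 0⟩, ⟨-1, 1⟩, ⟨0, 0⟩, ⟨0, -1⟩⟩
def ico48 : ℍ[GoldInt] := ⟨⟨1, 0⟩, ⟨0, 1⟩, ⟨-1, 1⟩, ⟨0, 0⟩⟩
def ico49 : ℍ[GoldInt] := ⟨⟨1, -1⟩, ⟨1, 0⟩, ⟨0, 1⟩, ⟨0, 0⟩⟩
def ico50 : ℍ[GoldInt] := ⟨⟨1, 0⟩, ⟨-1, 1⟩, ⟨0, 0⟩, ⟨0, -1⟩⟩
def ico51 : ℍ[GoldInt] := ⟨⟨-1, 0⟩, ⟨0, -1⟩, ⟨-1, 1⟩, ⟨0, 0⟩⟩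
def ico52 : ℍ[GoldInt] := ⟨⟨-1, 0⟩, ⟨1, -1⟩, ⟨0, 0⟩, ⟨0, -1⟩⟩
def ico53 : ℍ[GoldInt] := ⟨⟨1, 0⟩, ⟨0, -1⟩, ⟨-1, 1⟩, ⟨0, 0⟩⟩
def ico54 : ℍ[GoldInt] := ⟨⟨-1, 0⟩, ⟨1, 0⟩, ⟨-1, 0⟩, ⟨-1, 0⟩⟩
def ico55 : ℍ[GoldInt] := ⟨⟨0, -1⟩, ⟨0, 0⟩, ⟨-1, 1⟩, ⟨-1, 0⟩⟩
def ico56 : ℍ[GoldInt] := ⟨⟨-1, 1⟩, ⟨0, 0⟩, ⟨1, 0⟩, ⟨0, 1⟩⟩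
def ico57 : ℍ[GoldInt] := ⟨⟨-1, 0⟩, ⟨-1, 0⟩, ⟨1, 0⟩, ⟨1, 0⟩⟩
def ico58 : ℍ[GoldInt] := ⟨⟨-1, 1⟩, ⟨1, 0⟩, ⟨0, 1⟩, ⟨0, 0⟩⟩
def ico59 : ℍ[GoldInt] := ⟨⟨0, -1⟩, ⟨0, 0⟩, ⟨1, -1⟩, ⟨1, 0⟩⟩
def ico60 : ℍ[GoldInt] := ⟨⟨0, -1⟩, ⟨1, 0⟩, ⟨0, 0⟩, ⟨1, -1⟩⟩
def ico61 : ℍ[GoldInt] := ⟨⟨-1, 1⟩, ⟨0, 0⟩, ⟨-1, 0⟩, ⟨0, -1⟩⟩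
def ico62 : ℍ[GoldInt] := ⟨⟨0, 0⟩, ⟨0, 0⟩, ⟨-2, 0⟩, ⟨0, 0⟩⟩
def ico63 : ℍ[GoldInt] := ⟨⟨0, -1⟩, ⟨-1, 0⟩, ⟨0, 0⟩, ⟨-1, 1⟩⟩
def ico64 : ℍ[GoldInt] := ⟨⟨-1, 1⟩, ⟨1, 0⟩, ⟨0, -1⟩, ⟨0, 0⟩⟩
def ico65 : ℍ[GoldInt] := ⟨⟨-1, 1⟩, ⟨0, 1⟩, ⟨0, 0⟩, ⟨1, 0⟩⟩
def ico66 : ℍ[GoldInt] := ⟨⟨0, -1⟩, ⟨1, -1⟩, ⟨-1, 0⟩, ⟨0, 0⟩⟩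
def ico67 : ℍ[GoldInt] := ⟨⟨1, -1⟩, ⟨-1, 0⟩, ⟨0, 1⟩, ⟨0, 0⟩⟩
def ico68 : ℍ[GoldInt] := ⟨⟨0, -1⟩, ⟨1, 0⟩, ⟨0, 0⟩, ⟨-1, 1⟩⟩
def ico69 : ℍ[GoldInt] := ⟨⟨-1, 0⟩, ⟨1, -1⟩, ⟨0, 0⟩, ⟨0, 1⟩⟩
def ico70 : ℍ[GoldInt] := ⟨⟨-1, 1⟩, ⟨-1, 0⟩, ⟨0, 1⟩, ⟨0, 0⟩⟩
def ico71 : ℍ[GoldInt] := ⟨⟨0, 1⟩, ⟨1, 0⟩, ⟨0, 0⟩, ⟨-1, 1⟩⟩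
def ico72 : ℍ[GoldInt] := ⟨⟨0, -1⟩, ⟨-1, 0⟩, ⟨0, 0⟩, ⟨1, -1⟩⟩
def ico73 : ℍ[GoldInt] := ⟨⟨-1, 0⟩, ⟨0, 0⟩, ⟨0, 1⟩, ⟨1, -1⟩⟩
def ico74 : ℍ[GoldInt] := ⟨⟨-1, 1⟩, ⟨0, 1⟩, ⟨0, 0⟩, ⟨-1, 0⟩⟩
def ico75 : ℍ[GoldInt] := ⟨⟨0, 0⟩, ⟨0, 0⟩, ⟨0, 0⟩, ⟨-2, 0⟩⟩
def ico76 : ℍ[GoldInt] := ⟨⟨1, -1⟩, ⟨0, -1⟩, ⟨0, 0⟩, ⟨-1, 0⟩⟩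
def ico77 : ℍ[GoldInt] := ⟨⟨-1, 0⟩, ⟨0, 1⟩, ⟨1, -1⟩, ⟨0, 0⟩⟩
def ico78 : ℍ[GoldInt] := ⟨⟨-1, 0⟩, ⟨-1, 1⟩, ⟨0, 0⟩, ⟨0, 1⟩⟩
def ico79 : ℍ[GoldInt] := ⟨⟨0, -1⟩, ⟨1, -1⟩, ⟨1, 0⟩, ⟨0, 0⟩⟩
def ico80 : ℍ[GoldInt] := ⟨⟨-1, 0⟩, ⟨0, -1⟩, ⟨1, -1⟩, ⟨0, 0⟩⟩
def ico81 : ℍ[GoldInt] := ⟨⟨0, 0⟩, ⟨1, -1⟩, ⟨0, 1⟩, ⟨1, 0⟩⟩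
def ico82 : ℍ[GoldInt] := ⟨⟨1, 0⟩, ⟨0, 0⟩, ⟨0, -1⟩, ⟨-1, 1⟩⟩
def ico83 : ℍ[GoldInt] := ⟨⟨1, -1⟩, ⟨1, 0⟩, ⟨0, -1⟩, ⟨0, 0⟩⟩
def ico84 : ℍ[GoldInt] := ⟨⟨0, 1⟩, ⟨-1, 0⟩, ⟨0, 0⟩, ⟨1, -1⟩⟩
def ico85 : ℍ[GoldInt] := ⟨⟨-1, 1⟩, ⟨-1, 0⟩, ⟨0, -1⟩, ⟨0, 0⟩⟩
def ico86 : ℍ[GoldInt] := ⟨⟨0, 1⟩, ⟨-1, 1⟩, ⟨-1, 0⟩, ⟨0, 0⟩⟩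
def ico87 : ℍ[GoldInt] := ⟨⟨-1, 0⟩, ⟨0, 0⟩, ⟨0, -1⟩, ⟨-1, 1⟩⟩
def ico88 : ℍ[GoldInt] := ⟨⟨0, 0⟩, ⟨0, 1⟩, ⟨1, 0⟩, ⟨1, -1⟩⟩
def ico89 : ℍ[GoldInt] := ⟨⟨0, 0⟩, ⟨0, -1⟩, ⟨-1, 0⟩, ⟨1, -1⟩⟩
def ico90 : ℍ[GoldInt] := ⟨⟨0, 0⟩, ⟨-1, 1⟩, ⟨0, 1⟩, ⟨-1, 0⟩⟩
def ico91 : ℍ[GoldInt] := ⟨⟨1, 0⟩, ⟨0, -1⟩, ⟨1, -1⟩, ⟨0, 0⟩⟩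
def ico92 : ℍ[GoldInt] := ⟨⟨0, -1⟩, ⟨-1, 1⟩, ⟨-1, 0⟩, ⟨0, 0⟩⟩
def ico93 : ℍ[GoldInt] := ⟨⟨-1, 1⟩, ⟨0, -1⟩, ⟨0, 0⟩, ⟨-1, 0⟩⟩
def ico94 : ℍ[GoldInt] := ⟨⟨1, 0⟩, ⟨-1, 1⟩, ⟨0, 0⟩, ⟨0, 1⟩⟩
def ico95 : ℍ[GoldInt] := ⟨⟨0, 0⟩, ⟨-1, 0⟩, ⟨-1, 1⟩, ⟨0, 1⟩⟩
def ico96 : ℍ[GoldInt] := ⟨⟨0, -1⟩, ⟨-1, 1⟩, ⟨1, 0⟩, ⟨0, 0⟩⟩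
def ico97 : ℍ[GoldInt] := ⟨⟨-1, 1⟩, ⟨0, -1⟩, ⟨0, 0⟩, ⟨1, 0⟩⟩
def ico98 : ℍ[GoldInt] := ⟨⟨-1, 1⟩, ⟨0, 0⟩, ⟨-1, 0⟩, ⟨0, 1⟩⟩
def ico99 : ℍ[GoldInt] := ⟨⟨0, 0⟩, ⟨1, 0⟩, ⟨1, -1⟩, ⟨0, -1⟩⟩
def ico100 : ℍ[GoldInt] := ⟨⟨1, -1⟩, ⟨0, 1⟩, ⟨0, 0⟩, ⟨-1, 0⟩⟩
def ico101 : ℍ[GoldInt] := ⟨⟨0, 0⟩, ⟨-1, 0⟩, ⟨1, -1⟩, ⟨0, -1⟩⟩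
def ico102 : ℍ[GoldInt] := ⟨⟨0, -1⟩, ⟨0, 0⟩, ⟨-1, 1⟩, ⟨1, 0⟩⟩
def ico103 : ℍ[GoldInt] := ⟨⟨0, 1⟩, ⟨0, 0⟩, ⟨1, -1⟩, ⟨-1, 0⟩⟩
def ico104 : ℍ[GoldInt] := ⟨⟨0, 0⟩, ⟨-1, 1⟩, ⟨0, -1⟩, ⟨-1, 0⟩⟩
def ico105 : ℍ[GoldInt] := ⟨⟨1, -1⟩, ⟨0, 0⟩, ⟨-1, 0⟩, ⟨0, 1⟩⟩
def ico106 : ℍ[GoldInt] := ⟨⟨0, 1⟩, ⟨1, -1⟩, ⟨-1, 0⟩, ⟨0, 0⟩⟩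
def ico107 : ℍ[GoldInt] := ⟨⟨0, 0⟩, ⟨0, -1⟩, ⟨-1, 0⟩, ⟨-1, 1⟩⟩
def ico108 : ℍ[GoldInt] := ⟨⟨-1, 1⟩, ⟨0, 0⟩, ⟨1, 0⟩, ⟨0, -1⟩⟩
def ico109 : ℍ[GoldInt] := ⟨⟨0, 0⟩, ⟨1, 0⟩, ⟨-1, 1⟩, ⟨0, 1⟩⟩
def ico110 : ℍ[GoldInt] := ⟨⟨0, -1⟩, ⟨0, 0⟩, ⟨1, -1⟩, ⟨-1, 0⟩⟩
def ico111 : ℍ[GoldInt] := ⟨⟨0, 1⟩, ⟨-1, 1⟩, ⟨1, 0⟩, ⟨0, 0⟩⟩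
def ico112 : ℍ[GoldInt] := ⟨⟨1, -1⟩, ⟨0, -1⟩, ⟨0, 0⟩, ⟨1, 0⟩⟩
def ico113 : ℍ[GoldInt] := ⟨⟨1, 0⟩, ⟨0, 0⟩, ⟨0, 1⟩, ⟨1, -1⟩⟩
def ico114 : ℍ[GoldInt] := ⟨⟨1, -1⟩, ⟨0, 0⟩, ⟨1, 0⟩, ⟨0, -1⟩⟩
def ico115 : ℍ[GoldInt] := ⟨⟨0, 0⟩, ⟨1, -1⟩, ⟨0, -1⟩, ⟨-1, 0⟩⟩
def ico116 : ℍ[GoldInt] := ⟨⟨0, 0⟩, ⟨-1, 1⟩, ⟨0, 1⟩, ⟨1, 0⟩⟩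
def ico117 : ℍ[GoldInt] := ⟨⟨0, 0⟩, ⟨0, -1⟩, ⟨1, 0⟩, ⟨1, -1⟩⟩
def ico118 : ℍ[GoldInt] := ⟨⟨0, 0⟩, ⟨0, 1⟩, ⟨-1, 0⟩, ⟨-1, 1⟩⟩
def ico119 : ℍ[GoldInt] := ⟨⟨0, 1⟩, ⟨0, 0⟩, ⟨-1, 1⟩, ⟨1, 0⟩⟩

def icoList : List ℍ[GoldInt] := [ico0, ico1, ico2, ico3, ico4, ico5, ico6, ico7, ico8, ico9, ico10, ico11, ico12, ico13, ico14, ico15, ico16, ico17, ico18, ico19, ico20, ico21, ico22, ico23, ico24, ico25, ico26, ico27, ico28, ico29, ico30, ico31, ico32, ico33, ico34, ico35, ico36, ico37, ico38, ico39, ico40, ico41, ico42, ico43, ico44, ico45, ico46, ico47, ico48, ico49, ico50, ico51, ico52, ico53, ico54, ico55, ico56, ico57, ico58, ico59, ico60, ico61, ico62, ico63, ico64, ico65, ico66, ico67, ico68, ico69, ico70, ico71, ico72, ico73, ico74, ico75, ico76, ico77, ico78, ico79, ico80, ico81, ico82, ico83, ico84, ico85, ico86, ico87, ico88, ico89, ico90,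 ico91, ico92, ico93, ico94, ico95, ico96, ico97, ico98, ico99, ico100, ico101, ico102, ico103, ico104, ico105, ico106, ico107, ico108, ico109, ico110, ico111, ico112, ico113, ico114, ico115, ico116, ico117, ico118, ico119]

set_option maxHeartbeats 4000000 in
set_option maxRecDepth 1000000 in
theorem genmul0 : ∀ X ∈ icoList, ∃ Z ∈ icoList, ico0 * X = Z + Z := by decide

set_option maxHeartbeats 4000000 in
set_option maxRecDepth 1000000 in
theorem genmul1 : ∀ X ∈ icoList, ∃ Z ∈ icoList, ico1 * X = Z + Z := by decide

set_option maxHeartbeats 4000000 in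
set_option maxRecDepth 1000000 in
theorem genmul2 : ∀ X ∈ icoList, ∃ Z ∈ icoList, ico2 * X = Z + Z := by decide

set_option maxHeartbeats 4000000 in
set_option maxRecDepth 1000000 in
theorem genmul11 : ∀ X ∈ icoList, ∃ Z ∈ icoList, ico11 * X = Z + Z := by decide

set_option maxHeartbeats 4000000 in
set_option maxRecDepth 1000000 in
theorem genmul7 : ∀ X ∈ icoList, ∃ Z ∈ icoList, ico7 * X = Z + Z := by decide

set_option maxHeartbeats 4000000 in
set_option maxRecDepth 1000000 in
theorem genmul13 : ∀ X ∈ icoList, ∃ Z ∈ icoList, ico13 * X = Z + Z := by decide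

set_option maxHeartbeats 4000000 in
set_option maxRecDepth 1000000 in
theorem ico_card : icoList.toFinset.card = 120 := by decide

set_option maxHeartbeats 4000000 in
set_option maxRecDepth 1000000 in
/-- With `τ = (1+√5)/2`, `σ = (1−√5)/2`, the subgroup of `ℍˣ` generated by `i`,
`(−1+i+j+k)/2` and `(i − σj − τk)/2` has exactly 120 elements
(it is the binary icosahedral group). -/
theorem binary_icosahedral_group_order_120 (τ σ : ℝ)
    (hτ : τ = (1 + Real.sqrt 5) / 2) (hσ : σ = (1 - Real.sqrt 5) / 2)
    (f g h : ℍ[ℝ]ˣ)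
    (hf : (f : ℍ[ℝ]) = quatI)
    (hg : (g : ℍ[ℝ]) = (-1 + quatI + quatJ + quatK) / 2)
    (hh : (h : ℍ[ℝ]) = (quatI - σ • quatJ - τ • quatK) / 2) :
    Nat.card (Subgroup.closure ({f, g, h} : Set ℍ[ℝ]ˣ)) = 120 := by
  have h5 : Real.sqrt 5 * Real.sqrt 5 = 5 := Real.mul_self_sqrt (by norm_num)
  have ht : τ * τ = τ + 1 := by rw [hτ]; field_simp; nlinarith [h5]
  have hirr : Irrational τ := by
    rw [hτ]
    have h5i : Irrational (Real.sqrt 5) := (by norm_num : Nat.Prime 5).irrational_sqrt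
    have h1 : Irrational ((1 : ℚ) + Real.sqrt 5) := h5i.ratCast_add 1
    have h2 := h1.div_intCast (m := 2) (by norm_num)
    simpa using h2
  set Φ := qmap τ ht with hΦdef
  set H := Subgroup.closure ({f, g, h} : Set ℍ[ℝ]ˣ) with hHdef
  -- seed value equations
  have sf : (↑f : ℍ[ℝ]) = (2⁻¹ : ℝ) • Φ ico0 := by
    rw [hf, hΦdef]
    ext <;> simp [qmap_re, qmap_imI, qmap_imJ, qmap_imK] <;> simp [quatI, ico0] <;> norm_num
  have sg : (↑g : ℍ[ℝ]) = (2⁻¹ : ℝ) • Φ ico1 := by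
    rw [hg, hΦdef]
    rw [show ((2 : ℍ[ℝ])) = ((2 : ℝ) : ℍ[ℝ]) by norm_cast]
    rw [div_eq_mul_inv, ← Quaternion.coe_inv, Quaternion.mul_coe_eq_smul]
    ext <;> simp [qmap_re, qmap_imI, qmap_imJ, qmap_imK] <;> simp [quatI, quatJ, quatK, ico1] <;> norm_num
  have sh : (↑h : ℍ[ℝ]) = (2⁻¹ : ℝ) • Φ ico2 := by
    rw [hh, hΦdef]
    rw [show ((2 : ℍ[ℝ])) = ((2 : ℝ) : ℍ[ℝ]) by norm_cast]
    rw [div_eq_mul_inv, ← Quaternion.coe_inv, Quaternion.mul_coe_eq_smul]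
    ext <;> simp [qmap_re, qmap_imI, qmap_imJ, qmap_imK] <;> simp [quatI, quatJ, quatK, ico2, hσ, hτ] <;> norm_num <;> ring
  -- inverse value equations
  have sfi : (↑f⁻¹ : ℍ[ℝ]) = (2⁻¹ : ℝ) • Φ ico11 :=
    unit_inv_val (by rw [sf]; exact qmap_inv_step τ ht _ _ (by decide))
  have sgi : (↑g⁻¹ : ℍ[ℝ]) = (2⁻¹ : ℝ) • Φ ico7 :=
    unit_inv_val (by rw [sg]; exact qmap_inv_step τ ht _ _ (by decide))
  have shi : (↑h⁻¹ : ℍ[ℝ]) = (2⁻¹ : ℝ) • Φ ico13 :=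
    unit_inv_val (by rw [sh]; exact qmap_inv_step τ ht _ _ (by decide))
  -- upper bound
  have hup : ∀ u : ℍ[ℝ]ˣ, u ∈ H → ∃ X ∈ icoList, (↑u : ℍ[ℝ]) = (2⁻¹ : ℝ) • Φ X := by
    intro u hu
    induction hu using Subgroup.closure_induction_left with
    | one =>
      refine ⟨ico22, by decide, ?_⟩
      rw [hΦdef]
      ext <;> simp [qmap_re, qmap_imI, qmap_imJ, qmap_imK] <;> simp [ico22] <;> norm_num
    | mul_left x hx y hy ih =>
      obtain ⟨X, hX, hXv⟩ := ih
      simp only [Set.mem_insert_iff, Set.mem_singleton_iff] at hx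
      rcases hx with rfl | rfl | rfl
      · obtain ⟨Z, hZ, hZe⟩ := genmul0 X hX
        exact ⟨Z, hZ, by rw [Units.val_mul, sf, hXv]; exact qmap_step τ ht _ _ _ hZe⟩
      · obtain ⟨Z, hZ, hZe⟩ := genmul1 X hX
        exact ⟨Z, hZ, by rw [Units.val_mul, sg, hXv]; exact qmap_step τ ht _ _ _ hZe⟩
      · obtain ⟨Z, hZ, hZe⟩ := genmul2 X hX
        exact ⟨Z, hZ, by rw [Units.val_mul, sh, hXv]; exact qmap_step τ ht _ _ _ hZe⟩
    | inv_mul_cancel x hx y hy ih =>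
      obtain ⟨X, hX, hXv⟩ := ih
      simp only [Set.mem_insert_iff, Set.mem_singleton_iff] at hx
      rcases hx with rfl | rfl | rfl
      · obtain ⟨Z, hZ, hZe⟩ := genmul11 X hX
        exact ⟨Z, hZ, by rw [Units.val_mul, sfi, hXv]; exact qmap_step τ ht _ _ _ hZe⟩
      · obtain ⟨Z, hZ, hZe⟩ := genmul7 X hX
        exact ⟨Z, hZ, by rw [Units.val_mul, sgi, hXv]; exact qmap_step τ ht _ _ _ hZe⟩
      · obtain ⟨Z, hZ, hZe⟩ := genmul13 X hX
        exact ⟨Z, hZ, by rw [Units.val_mul, shi, hXv]; exact qmap_step τ ht _ _ _ hZe⟩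
  -- lower bound: every icosian is reached
  have key : ∀ W X Z : ℍ[GoldInt], W * X = Z + Z →
      (∃ u, u ∈ H ∧ (↑u : ℍ[ℝ]) = (2⁻¹ : ℝ) • Φ W) →
      (∃ v, v ∈ H ∧ (↑v : ℍ[ℝ]) = (2⁻¹ : ℝ) • Φ X) →
      (∃ w, w ∈ H ∧ (↑w : ℍ[ℝ]) = (2⁻¹ : ℝ) • Φ Z) := by
    rintro W X Z hWXZ ⟨u, hu, hue⟩ ⟨v, hv, hve⟩
    exact ⟨u * v, mul_mem hu hv,
      by rw [Units.val_mul, hue, hve]; exact qmap_step τ ht _ _ _ hWXZ⟩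
  have hfH : f ∈ H := Subgroup.subset_closure (by simp)
  have hgH : g ∈ H := Subgroup.subset_closure (by simp)
  have hhH : h ∈ H := Subgroup.subset_closure (by simp)
  have p0 : ∃ u, u ∈ H ∧ (↑u : ℍ[ℝ]) = (2⁻¹ : ℝ) • Φ ico0 := ⟨f, hfH, sf⟩
  have p1 : ∃ u, u ∈ H ∧ (↑u : ℍ[ℝ]) = (2⁻¹ : ℝ) • Φ ico1 := ⟨g, hgH, sg⟩
  have p2 : ∃ u, u ∈ H ∧ (↑u : ℍ[ℝ]) = (2⁻¹ : ℝ) • Φ ico2 := ⟨h, hhH, sh⟩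
  have p3 := key ico0 ico0 ico3 (by decide) p0 p0
  have p4 := key ico0 ico1 ico4 (by decide) p0 p1
  have p5 := key ico0 ico2 ico5 (by decide) p0 p2
  have p6 := key ico1 ico0 ico6 (by decide) p1 p0
  have p7 := key ico1 ico1 ico7 (by decide) p1 p1
  have p8 := key ico1 ico2 ico8 (by decide) p1 p2
  have p9 := key ico2 ico0 ico9 (by decide) p2 p0
  have p10 := key ico2 ico1 ico10 (by decide) p2 p1
  have p11 := key ico0 ico3 ico11 (by decide) p0 p3
  have p12 := key ico0 ico4 ico12 (by decide) p0 p4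
  have p13 := key ico0 ico5 ico13 (by decide) p0 p5
  have p14 := key ico0 ico6 ico14 (by decide) p0 p6
  have p15 := key ico0 ico7 ico15 (by decide) p0 p7
  have p16 := key ico0 ico8 ico16 (by decide) p0 p8
  have p17 := key ico0 ico9 ico17 (by decide) p0 p9
  have p18 := key ico0 ico10 ico18 (by decide) p0 p10
  have p19 := key ico1 ico4 ico19 (by decide) p1 p4
  have p20 := key ico1 ico5 ico20 (by decide) p1 p5
  have p21 := key ico1 ico6 ico21 (by decide) p1 p6
  have p22 := key ico1 ico7 ico22 (by decide) p1 p7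
  have p23 := key ico1 ico9 ico23 (by decide) p1 p9
  have p24 := key ico2 ico4 ico24 (by decide) p2 p4
  have p25 := key ico2 ico5 ico25 (by decide) p2 p5
  have p26 := key ico2 ico6 ico26 (by decide) p2 p6
  have p27 := key ico2 ico8 ico27 (by decide) p2 p8
  have p28 := key ico3 ico4 ico28 (by decide) p3 p4
  have p29 := key ico3 ico5 ico29 (by decide) p3 p5
  have p30 := key ico3 ico6 ico30 (by decide) p3 p6
  have p31 := key ico3 ico8 ico31 (by decide) p3 p8
  have p32 := key ico3 ico9 ico32 (by decide) p3 p9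
  have p33 := key ico3 ico10 ico33 (by decide) p3 p10
  have p34 := key ico4 ico4 ico34 (by decide) p4 p4
  have p35 := key ico4 ico5 ico35 (by decide) p4 p5
  have p36 := key ico4 ico9 ico36 (by decide) p4 p9
  have p37 := key ico5 ico4 ico37 (by decide) p5 p4
  have p38 := key ico5 ico6 ico38 (by decide) p5 p6
  have p39 := key ico5 ico8 ico39 (by decide) p5 p8
  have p40 := key ico6 ico7 ico40 (by decide) p6 p7
  have p41 := key ico6 ico8 ico41 (by decide) p6 p8
  have p42 := key ico6 ico9 ico42 (by decide) p6 p9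
  have p43 := key ico6 ico10 ico43 (by decide) p6 p10
  have p44 := key ico7 ico4 ico44 (by decide) p7 p4
  have p45 := key ico7 ico5 ico45 (by decide) p7 p5
  have p46 := key ico8 ico4 ico46 (by decide) p8 p4
  have p47 := key ico8 ico5 ico47 (by decide) p8 p5
  have p48 := key ico9 ico6 ico48 (by decide) p9 p6
  have p49 := key ico9 ico7 ico49 (by decide) p9 p7
  have p50 := key ico9 ico8 ico50 (by decide) p9 p8
  have p51 := key ico9 ico10 ico51 (by decide) p9 p10
  have p52 := key ico10 ico4 ico52 (by decide) p10 p4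
  have p53 := key ico10 ico5 ico53 (by decide) p10 p5
  have p54 := key ico0 ico30 ico54 (by decide) p0 p30
  have p55 := key ico0 ico31 ico55 (by decide) p0 p31
  have p56 := key ico0 ico33 ico56 (by decide) p0 p33
  have p57 := key ico0 ico34 ico57 (by decide) p0 p34
  have p58 := key ico0 ico35 ico58 (by decide) p0 p35
  have p59 := key ico0 ico36 ico59 (by decide) p0 p36
  have p60 := key ico0 ico37 ico60 (by decide) p0 p37
  have p61 := key ico0 ico38 ico61 (by decide) p0 p38
  have p62 := key ico0 ico40 ico62 (by decide) p0 p40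
  have p63 := key ico0 ico41 ico63 (by decide) p0 p41
  have p64 := key ico0 ico42 ico64 (by decide) p0 p42
  have p65 := key ico0 ico43 ico65 (by decide) p0 p43
  have p66 := key ico0 ico46 ico66 (by decide) p0 p46
  have p67 := key ico0 ico47 ico67 (by decide) p0 p47
  have p68 := key ico0 ico48 ico68 (by decide) p0 p48
  have p69 := key ico0 ico49 ico69 (by decide) p0 p49
  have p70 := key ico0 ico52 ico70 (by decide) p0 p52
  have p71 := key ico0 ico53 ico71 (by decide) p0 p53
  have p72 := key ico1 ico36 ico72 (by decide) p1 p36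
  have p73 := key ico1 ico37 ico73 (by decide) p1 p37
  have p74 := key ico1 ico38 ico74 (by decide) p1 p38
  have p75 := key ico1 ico39 ico75 (by decide) p1 p39
  have p76 := key ico1 ico41 ico76 (by decide) p1 p41
  have p77 := key ico1 ico42 ico77 (by decide) p1 p42
  have p78 := key ico1 ico43 ico78 (by decide) p1 p43
  have p79 := key ico1 ico48 ico79 (by decide) p1 p48
  have p80 := key ico1 ico49 ico80 (by decide) p1 p49
  have p81 := key ico1 ico50 ico81 (by decide) p1 p50
  have p82 := key ico1 ico51 ico82 (by decide) p1 p51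
  have p83 := key ico2 ico36 ico83 (by decide) p2 p36
  have p84 := key ico2 ico38 ico84 (by decide) p2 p38
  have p85 := key ico2 ico39 ico85 (by decide) p2 p39
  have p86 := key ico2 ico40 ico86 (by decide) p2 p40
  have p87 := key ico2 ico41 ico87 (by decide) p2 p41
  have p88 := key ico2 ico43 ico88 (by decide) p2 p43
  have p89 := key ico3 ico36 ico89 (by decide) p3 p36
  have p90 := key ico3 ico38 ico90 (by decide) p3 p38
  have p91 := key ico3 ico41 ico91 (by decide) p3 p41
  have p92 := key ico3 ico43 ico92 (by decide) p3 p43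
  have p93 := key ico3 ico46 ico93 (by decide) p3 p46
  have p94 := key ico3 ico52 ico94 (by decide) p3 p52
  have p95 := key ico4 ico37 ico95 (by decide) p4 p37
  have p96 := key ico4 ico38 ico96 (by decide) p4 p38
  have p97 := key ico4 ico48 ico97 (by decide) p4 p48
  have p98 := key ico4 ico50 ico98 (by decide) p4 p50
  have p99 := key ico4 ico51 ico99 (by decide) p4 p51
  have p100 := key ico5 ico40 ico100 (by decide) p5 p40
  have p101 := key ico5 ico41 ico101 (by decide) p5 p41
  have p102 := key ico5 ico43 ico102 (by decide) p5 p43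
  have p103 := key ico6 ico46 ico103 (by decide) p6 p46
  have p104 := key ico6 ico49 ico104 (by decide) p6 p49
  have p105 := key ico6 ico52 ico105 (by decide) p6 p52
  have p106 := key ico7 ico36 ico106 (by decide) p7 p36
  have p107 := key ico7 ico37 ico107 (by decide) p7 p37
  have p108 := key ico8 ico36 ico108 (by decide) p8 p36
  have p109 := key ico8 ico38 ico109 (by decide) p8 p38
  have p110 := key ico10 ico38 ico110 (by decide) p10 p38
  have p111 := key ico11 ico46 ico111 (by decide) p11 p46
  have p112 := key ico12 ico38 ico112 (by decide) p12 p38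
  have p113 := key ico13 ico41 ico113 (by decide) p13 p41
  have p114 := key ico14 ico49 ico114 (by decide) p14 p49
  have p115 := key ico14 ico52 ico115 (by decide) p14 p52
  have p116 := key ico16 ico36 ico116 (by decide) p16 p36
  have p117 := key ico18 ico38 ico117 (by decide) p18 p38
  have p118 := key ico19 ico48 ico118 (by decide) p19 p48
  have p119 := key ico20 ico41 ico119 (by decide) p20 p41
  have hdown : ∀ X ∈ icoList, ∃ u, u ∈ H ∧ (↑u : ℍ[ℝ]) = (2⁻¹ : ℝ) • Φ X := by
    intro X hX
    simp only [icoList, List.mem_cons, List.not_mem_nil, or_false] at hX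
    rcases hX with rfl|rfl|rfl|rfl|rfl|rfl|rfl|rfl|rfl|rfl|rfl|rfl|rfl|rfl|rfl|rfl|rfl|rfl|rfl|rfl|rfl|rfl|rfl|rfl|rfl|rfl|rfl|rfl|rfl|rfl|rfl|rfl|rfl|rfl|rfl|rfl|rfl|rfl|rfl|rfl|rfl|rfl|rfl|rfl|rfl|rfl|rfl|rfl|rfl|rfl|rfl|rfl|rfl|rfl|rfl|rfl|rfl|rfl|rfl|rfl|rfl|rfl|rfl|rfl|rfl|rfl|rfl|rfl|rfl|rfl|rfl|rfl|rfl|rfl|rfl|rfl|rfl|rfl|rfl|rfl|rfl|rfl|rfl|rfl|rfl|rfl|rfl|rfl|rfl|rfl|rfl|rfl|rfl|rfl|rfl|rfl|rfl|rfl|rfl|rfl|rfl|rfl|rfl|rfl|rfl|rfl|rfl|rfl|rfl|rfl|rfl|rfl|rfl|rfl|rfl|rfl|rfl|rfl|rfl|rfl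
    exacts [p0, p1, p2, p3, p4, p5, p6, p7, p8, p9, p10, p11, p12, p13, p14, p15, p16, p17, p18, p19, p20, p21, p22, p23, p24, p25, p26, p27, p28, p29, p30, p31, p32, p33, p34, p35, p36, p37, p38, p39, p40, p41, p42, p43, p44, p45, p46, p47, p48, p49, p50, p51, p52, p53, p54, p55, p56, p57, p58, p59, p60, p61, p62, p63, p64, p65, p66, p67, p68, p69, p70, p71, p72, p73, p74, p75, p76, p77, p78, p79, p80, p81, p82, p83, p84, p85, p86, p87, p88, p89, p90, p91, p92, p93, p94, p95, p96, p97, p98, p99, p100, p101, p102, p103, p104, p105, p106, p107, p108, p109, p110, p111, p112, p113, p114, p115, p116, p117, p118, p119]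
  -- set equality and counting
  have hsetEq : ((↑) '' (H : Set ℍ[ℝ]ˣ) : Set ℍ[ℝ]) =
      (fun X => (2⁻¹ : ℝ) • Φ X) '' (icoList.toFinset : Set ℍ[GoldInt]) := by
    ext q
    constructor
    · rintro ⟨u, hu, rfl⟩
      obtain ⟨X, hX, hXe⟩ := hup u hu
      exact ⟨X, by simpa [List.mem_toFinset] using hX, hXe.symm⟩
    · rintro ⟨X, hX, rfl⟩
      obtain ⟨u, hu, hue⟩ := hdown X (by simpa [List.mem_toFinset] using hX)
      exact ⟨u, hu, hue⟩
  have hinj2 : Function.Injective (fun X : ℍ[GoldInt] => (2⁻¹ : ℝ) • Φ X) := by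
    intro x y hxy
    apply qmap_injective τ ht hirr
    have h2 := congrArg (fun z => (2 : ℝ) • z) hxy
    simpa [smul_smul] using h2
  calc Nat.card H = Nat.card ((↑) '' (H : Set ℍ[ℝ]ˣ) : Set ℍ[ℝ]) :=
        (Nat.card_image_of_injective Units.val_injective _).symm
    _ = Nat.card ((fun X => (2⁻¹ : ℝ) • Φ X) '' (icoList.toFinset : Set ℍ[GoldInt])) := by
        rw [hsetEq]
    _ = Nat.card (icoList.toFinset : Set ℍ[GoldInt]) :=
        Nat.card_image_of_injective hinj2 _
    _ = icoList.toFinset.card := by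
        rw [Nat.card_coe_set_eq, Set.ncard_coe_finset]
    _ = 120 := ico_card
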